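/- If R: V → G is a relative Rota-Baxter operator of weight 0, then defining u ▷ v = Φ(R(u))v makes (V, +, ▷) a pre-group, i.e., x ▷ (y+z) = (x ▷ y) + (x ▷ z) and x ▷ (y ▷ z) = (x + x ▷ y) ▷ z for all x,y,z ∈ V. -/

import Mathlib

theorem rrb_pre_group {G V : Type*} [Group G] [AddCommGroup V]
    (Φ : G →* Multiplicative (AddAut V)) (R : V → G)
    (hR : ∀ u v : V, R u * R v = R (u + (Φ (R u)).toAdd v)) :
    (∀ x y z : V, (Φ (R x)).toAdd (y + z) = (Φ (R x)).toAdd y + (Φ (R x)).toAdd z) ∧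
    (∀ x y z : V, (Φ (R x)).toAdd ((Φ (R y)).toAdd z) = (Φ (R (x + (Φ (R x)).toAdd y))).toAdd z) := by
  constructor
  · intro x y z; exact map_add (Φ (R x)).toAdd y z
  · intro x y z
    rw [← hR, map_mul]
    rfl
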